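/- Let v ∈ ℤ^n, S a tentacle S = {λ_v(s)ξ : ξ ∈ U, 0 < s ≤ 1} with U ⊆ (ℝ₊*)^n open, non-empty and with compact closure in (ℝ₊*)^n. Then a monomial x^α (α ∈ ℤ^n) is bounded on S if and only if ⟨α, v⟩ ≥ 0. -/
import Mathlib

lemma zpow_sum' {s : ℝ} (hs : s ≠ 0) {ι : Type*} (t : Finset ι) (f : ι → ℤ) :
    s ^ (∑ i ∈ t, f i) = ∏ i ∈ t, s ^ f i := by
  induction t using Finset.cons_induction with
  | empty => simp
  | cons a t ha ih => simp [Finset.sum_cons, Finset.prod_cons, zpow_add₀ hs, ih]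

lemma key_prod (n : ℕ) (s : ℝ) (hs : 0 < s) (ξ : Fin n → ℝ) (v α : Fin n → ℤ) :
    ∏ i, (s ^ v i * ξ i) ^ α i = s ^ (∑ i, α i * v i) * ∏ i, ξ i ^ α i := by
  rw [zpow_sum' hs.ne', ← Finset.prod_mul_distrib]
  refine Finset.prod_congr rfl fun i _ => ?_
  rw [mul_zpow, ← zpow_mul, mul_comm (α i)]

/-- A monomial `x^α` is bounded on the `v`-tentacle `S = {λ_v(s)·ξ : ξ ∈ U, 0 < s ≤ 1}`
(with `U` open, non-empty, with compact closure inside the open positive orthant) if and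
only if `⟨α, v⟩ ≥ 0`. -/
theorem stmt_15 (n : ℕ) (U : Set (Fin n → ℝ)) (hUopen : IsOpen U) (hUne : U.Nonempty)
    (hUcpt : IsCompact (closure U))
    (hUpos : closure U ⊆ {ξ | ∀ i, 0 < ξ i})
    (v : Fin n → ℤ) (S : Set (Fin n → ℝ))
    (hS : S = {x | ∃ ξ ∈ U, ∃ s : ℝ, 0 < s ∧ s ≤ 1 ∧ x = fun i => s ^ v i * ξ i})
    (α : Fin n → ℤ) :
    (∃ B : ℝ, ∀ x ∈ S, |∏ i, x i ^ α i| ≤ B) ↔ 0 ≤ ∑ i, α i * v i := by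
  subst hS
  set m : ℤ := ∑ i, α i * v i with hm
  constructor
  · rintro ⟨B, hB⟩
    by_contra hneg
    push_neg at hneg
    obtain ⟨ξ, hξU⟩ := hUne
    have hξpos : ∀ i, 0 < ξ i := hUpos (subset_closure hξU)
    set C : ℝ := ∏ i, ξ i ^ α i with hC
    have hCpos : 0 < C := Finset.prod_pos fun i _ => zpow_pos (hξpos i) _
    set B' : ℝ := max B 0 with hB'
    set s : ℝ := C / (B' + C) with hs
    have hden : 0 < B' + C := by positivity
    have hspos : 0 < s := div_pos hCpos hden
    have hsle : s ≤ 1 := by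
      rw [hs, div_le_one hden]
      linarith [le_max_right B 0]
    have hmem : (fun i => s ^ v i * ξ i) ∈
        {x | ∃ ξ ∈ U, ∃ s : ℝ, 0 < s ∧ s ≤ 1 ∧ x = fun i => s ^ v i * ξ i} :=
      ⟨ξ, hξU, s, hspos, hsle, rfl⟩
    have hval := hB _ hmem
    rw [key_prod n s hspos ξ v α] at hval
    have hsm : 0 < s ^ m := zpow_pos hspos _
    rw [abs_of_pos (mul_pos hsm hCpos)] at hval
    have h1 : s ^ (-1 : ℤ) ≤ s ^ m :=
      zpow_le_zpow_right_of_le_one₀ hspos hsle (by omega)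
    have h2 : s ^ (-1 : ℤ) = (B' + C) / C := by
      rw [zpow_neg_one, hs, inv_div]
    have h3 : (B' + C) / C * C ≤ s ^ m * C := by
      rw [← h2]; exact mul_le_mul_of_nonneg_right h1 hCpos.le
    rw [div_mul_cancel₀ _ hCpos.ne'] at h3
    have : B' + C ≤ B := le_trans h3 hval
    have := le_max_left B 0
    linarith
  · intro hm0
    have hcont : ContinuousOn (fun ξ : Fin n → ℝ => |∏ i, ξ i ^ α i|) (closure U) := by
      refine ContinuousOn.abs ?_
      refine continuousOn_finset_prod _ fun i _ => ?_
      exact ContinuousOn.zpow₀ (continuous_apply i).continuousOn _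
        fun ξ hξ => Or.inl (hUpos hξ i).ne'
    obtain ⟨B, hBbd⟩ := hUcpt.exists_bound_of_continuousOn hcont
    refine ⟨max B 0, ?_⟩
    rintro x ⟨ξ, hξU, s, hspos, hsle, rfl⟩
    rw [key_prod n s hspos ξ v α, abs_mul]
    have hsm1 : |s ^ m| ≤ 1 := by
      rw [abs_of_pos (zpow_pos hspos m)]
      obtain ⟨k, hk⟩ := Int.eq_ofNat_of_zero_le hm0
      rw [hk, zpow_natCast]
      exact pow_le_one₀ hspos.le hsle
    calc |s ^ m| * |∏ i, ξ i ^ α i| ≤ 1 * max B 0 := by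
          refine mul_le_mul hsm1 ?_ (abs_nonneg _) one_pos.le
          have := hBbd ξ (subset_closure hξU)
          rw [Real.norm_eq_abs, abs_abs] at this
          exact le_trans this (le_max_left _ _)
      _ = max B 0 := one_mul _
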